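/- In two variables, with R_k := rot(P_{k+1}) (vector rot of scalars) and R_k^⊥ its L^2(E)-orthogonal complement in (P_k)^2 for a polygon E, the divergence is a linear isomorphism from R_k^⊥ onto P_{k-1}. -/

import Mathlib

open MvPolynomial MeasureTheory

/-- `degLE n p` means `p ∈ P_n`, with the convention `P_n = {0}` for `n < 0`. -/
def degLE (n : ℤ) (p : MvPolynomial (Fin 2) ℝ) : Prop :=
  if 0 ≤ n then p.totalDegree ≤ n.toNat else p = 0

/-- The `L²(E)` inner product against a fixed polynomial vector field `g`,
as a linear functional `v ↦ ∫_E v · g`. -/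
noncomputable def ipL (E : Set (Fin 2 → ℝ)) (hEb : Bornology.IsBounded E)
    (g : Fin 2 → MvPolynomial (Fin 2) ℝ) :
    (Fin 2 → MvPolynomial (Fin 2) ℝ) →ₗ[ℝ] ℝ where
  toFun v := ∫ x in E, ∑ i, eval x (v i) * eval x (g i)
  map_add' v w := by
    have h : ∀ u : Fin 2 → MvPolynomial (Fin 2) ℝ,
        IntegrableOn (fun x => ∑ i, eval x (u i) * eval x (g i)) E volume := by
      intro u
      have hc : Continuous fun x : Fin 2 → ℝ => ∑ i, eval x (u i) * eval x (g i) :=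
        continuous_finset_sum _ fun i _ =>
          (MvPolynomial.continuous_eval (u i)).mul (MvPolynomial.continuous_eval (g i))
      exact ((hc.continuousOn).integrableOn_compact hEb.isCompact_closure).mono_set
        subset_closure
    have heq : (fun x => ∑ i, eval x ((v + w) i) * eval x (g i)) =
        fun x => (∑ i, eval x (v i) * eval x (g i)) + ∑ i, eval x (w i) * eval x (g i) := by
      funext x
      simp [add_mul, Finset.sum_add_distrib]
    show (∫ x in E, ∑ i, eval x ((v + w) i) * eval x (g i)) = _
    rw [heq]
    exact integral_add (h v) (h w)
  map_smul' c v := by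
    have heq : (fun x => ∑ i, eval x ((c • v) i) * eval x (g i)) =
        fun x => c • ∑ i, eval x (v i) * eval x (g i) := by
      funext x
      simp [MvPolynomial.smul_eval, mul_assoc]
      ring
    show (∫ x in E, ∑ i, eval x ((c • v) i) * eval x (g i)) = _
    rw [heq, integral_smul]
    rfl

/-- `(P_k)²`, the vector polynomials of degree at most `k` in two variables. -/
noncomputable def Pvec (k : ℕ) : Submodule ℝ (Fin 2 → MvPolynomial (Fin 2) ℝ) :=
  Submodule.pi Set.univ fun _ => MvPolynomial.restrictTotalDegree (Fin 2) ℝ k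

/-- The vector rot of a scalar: `rot q = (∂q/∂y, −∂q/∂x)`. -/
noncomputable def vrot (q : MvPolynomial (Fin 2) ℝ) : Fin 2 → MvPolynomial (Fin 2) ℝ :=
  ![pderiv 1 q, -pderiv 0 q]

/-- `R_k^⊥`: the `L²(E)`-orthogonal complement of `R_k = rot (P_{k+1})` inside `(P_k)²`. -/
noncomputable def Rperp (E : Set (Fin 2 → ℝ)) (hEb : Bornology.IsBounded E) (k : ℕ) :
    Submodule ℝ (Fin 2 → MvPolynomial (Fin 2) ℝ) :=
  Pvec k ⊓ ⨅ p ∈ {p : MvPolynomial (Fin 2) ℝ | p.totalDegree ≤ k + 1},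
    LinearMap.ker (ipL E hEb (vrot p))

/-- The divergence `div (v₁, v₂) = ∂v₁/∂x + ∂v₂/∂y`, as a linear map. -/
noncomputable def divLM :
    (Fin 2 → MvPolynomial (Fin 2) ℝ) →ₗ[ℝ] MvPolynomial (Fin 2) ℝ :=
  LinearMap.comp (pderiv (0 : Fin 2)).toLinearMap
      (LinearMap.proj (φ := fun _ : Fin 2 => MvPolynomial (Fin 2) ℝ) (R := ℝ) 0) +
    LinearMap.comp (pderiv (1 : Fin 2)).toLinearMap
      (LinearMap.proj (φ := fun _ : Fin 2 => MvPolynomial (Fin 2) ℝ) (R := ℝ) 1)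

namespace Aux

/-- Antiderivative with respect to variable `i`. -/
noncomputable def antid (i : Fin 2) (p : MvPolynomial (Fin 2) ℝ) : MvPolynomial (Fin 2) ℝ :=
  Finsupp.sum (AddMonoidAlgebra.coeff p) fun m c => monomial (m + Finsupp.single i 1) (((m i : ℝ) + 1)⁻¹ * c)

theorem antid_add (i : Fin 2) (p q : MvPolynomial (Fin 2) ℝ) :
    antid i (p + q) = antid i p + antid i q := by
  unfold antid
  exact Finsupp.sum_add_index (fun m _ => by simp) (fun m _ c c' => by rw [mul_add, map_add])

theorem antid_zero (i : Fin 2) : antid i 0 = 0 := Finsupp.sum_zero_index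

theorem antid_neg (i : Fin 2) (p : MvPolynomial (Fin 2) ℝ) : antid i (-p) = -antid i p := by
  have := antid_add i p (-p)
  rw [add_neg_cancel, antid_zero] at this
  linear_combination -this

theorem antid_monomial (i : Fin 2) (m : Fin 2 →₀ ℕ) (c : ℝ) :
    antid i (monomial m c) = monomial (m + Finsupp.single i 1) (((m i : ℝ) + 1)⁻¹ * c) := by
  unfold antid
  rw [MvPolynomial.sum_monomial_eq]
  simp

theorem pderiv_antid_self (i : Fin 2) (p : MvPolynomial (Fin 2) ℝ) :
    pderiv i (antid i p) = p := by
  induction p using MvPolynomial.induction_on' with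
  | monomial m c =>
    rw [antid_monomial, pderiv_monomial]
    have h1 : (m + Finsupp.single i 1 : Fin 2 →₀ ℕ) i = m i + 1 := by simp
    have h2 : m + Finsupp.single i 1 - Finsupp.single i 1 = m := by
      ext a
      rw [Finsupp.tsub_apply, Finsupp.add_apply]
      rcases eq_or_ne a i with rfl | h
      · simp
      · simp [Finsupp.single_apply, h]
    rw [h1, h2]
    congr 1
    push_cast
    have : (m i : ℝ) + 1 ≠ 0 := by positivity
    field_simp
  | add p q hp hq => rw [antid_add, map_add, hp, hq]

theorem pderiv_antid_ne {i j : Fin 2} (hij : i ≠ j) (p : MvPolynomial (Fin 2) ℝ) :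
    pderiv j (antid i p) = antid i (pderiv j p) := by
  induction p using MvPolynomial.induction_on' with
  | monomial m c =>
    rw [antid_monomial, pderiv_monomial, pderiv_monomial, antid_monomial]
    have h1 : m + Finsupp.single i 1 - Finsupp.single j 1
        = m - Finsupp.single j 1 + Finsupp.single i 1 := by
      ext a
      rw [Finsupp.tsub_apply, Finsupp.add_apply, Finsupp.add_apply, Finsupp.tsub_apply,
        Finsupp.single_apply, Finsupp.single_apply]
      split_ifs with ha hb
      · exact absurd (ha.trans hb.symm) hij
      · omega
      · omega
      · omega
    have h2 : (m + Finsupp.single i 1 : Fin 2 →₀ ℕ) j = m j := by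
      rw [Finsupp.add_apply, Finsupp.single_apply, if_neg hij, add_zero]
    have h3 : (m - Finsupp.single j 1 : Fin 2 →₀ ℕ) i = m i := by
      rw [Finsupp.tsub_apply, Finsupp.single_apply, if_neg (Ne.symm hij), Nat.sub_zero]
    rw [h1, h2, h3]
    congr 1
    ring
  | add p q hp hq => rw [antid_add, map_add, map_add, hp, hq, antid_add]

theorem pderiv_comm' (i j : Fin 2) (p : MvPolynomial (Fin 2) ℝ) :
    pderiv i (pderiv j p) = pderiv j (pderiv i p) := by
  rcases eq_or_ne i j with rfl | hij
  · rfl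
  · induction p using MvPolynomial.induction_on' with
    | monomial m c =>
      rw [pderiv_monomial, pderiv_monomial, pderiv_monomial, pderiv_monomial]
      have h1 : m - Finsupp.single j 1 - Finsupp.single i 1
          = m - Finsupp.single i 1 - Finsupp.single j 1 := tsub_right_comm
      have h2 : (m - Finsupp.single j 1 : Fin 2 →₀ ℕ) i = m i := by
        rw [Finsupp.tsub_apply, Finsupp.single_apply, if_neg (Ne.symm hij), Nat.sub_zero]
      have h3 : (m - Finsupp.single i 1 : Fin 2 →₀ ℕ) j = m j := by
        rw [Finsupp.tsub_apply, Finsupp.single_apply, if_neg hij, Nat.sub_zero]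
      rw [h1, h2, h3]
      congr 1
      ring
    | add p q hp hq => simp only [map_add, hp, hq]

theorem totalDegree_antid_le (i : Fin 2) (p : MvPolynomial (Fin 2) ℝ) :
    (antid i p).totalDegree ≤ p.totalDegree + 1 := by
  unfold antid
  rw [Finsupp.sum]
  apply totalDegree_finsetSum_le
  intro m hm
  refine (totalDegree_monomial_le _ _).trans ?_
  have h1 : ((m + Finsupp.single i 1 : Fin 2 →₀ ℕ).sum fun _ e => e)
      = (m.sum fun _ e => e) + 1 := by
    rw [Finsupp.sum_add_index (by simp) (by simp), Finsupp.sum_single_index rfl]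
  calc ((m + Finsupp.single i 1 : Fin 2 →₀ ℕ).sum fun _ e => e)
      = (m.sum fun _ e => e) + 1 := h1
    _ ≤ p.totalDegree + 1 := by
        exact Nat.add_le_add_right (le_totalDegree hm) 1


/-- Substitute `0` for the variable `j`. -/
noncomputable def subz (j : Fin 2) (p : MvPolynomial (Fin 2) ℝ) : MvPolynomial (Fin 2) ℝ :=
  aeval (fun a => if a = j then 0 else X a) p

theorem subz_monomial (j : Fin 2) (m : Fin 2 →₀ ℕ) (c : ℝ) :
    subz j (monomial m c) = if m j = 0 then monomial m c else 0 := by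
  unfold subz
  rw [aeval_monomial, Finsupp.prod_fintype _ _ (fun a => pow_zero _)]
  rcases eq_or_ne (m j) 0 with h | h
  · rw [if_pos h]
    have : ∀ a : Fin 2, (if a = j then (0 : MvPolynomial (Fin 2) ℝ) else X a) ^ m a = X a ^ m a := by
      intro a
      rcases eq_or_ne a j with rfl | ha
      · rw [if_pos rfl, h, pow_zero, pow_zero]
      · rw [if_neg ha]
    simp_rw [this]
    rw [monomial_eq, Finsupp.prod_fintype _ _ (fun a => pow_zero _)]
    rfl
  · rw [if_neg h]
    apply mul_eq_zero_of_right
    apply Finset.prod_eq_zero (Finset.mem_univ j)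
    rw [if_pos rfl, zero_pow h]

theorem pderiv_subz (j : Fin 2) (p : MvPolynomial (Fin 2) ℝ) :
    pderiv j (subz j p) = 0 := by
  induction p using MvPolynomial.induction_on' with
  | monomial m c =>
    rw [subz_monomial]
    split_ifs with h
    · rw [pderiv_monomial, h]
      simp
    · simp
  | add p q hp hq =>
    unfold subz at *
    rw [map_add, map_add, hp, hq, add_zero]

theorem antid_pderiv (j : Fin 2) (p : MvPolynomial (Fin 2) ℝ) :
    antid j (pderiv j p) = p - subz j p := by
  induction p using MvPolynomial.induction_on' with
  | monomial m c =>
    rw [pderiv_monomial, subz_monomial]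
    rcases eq_or_ne (m j) 0 with h | h
    · rw [if_pos h, h]
      simp [antid_zero]
    · rw [if_neg h, antid_monomial, sub_zero]
      have h2 : (m - Finsupp.single j 1 : Fin 2 →₀ ℕ) j = m j - 1 := by
        rw [Finsupp.tsub_apply, Finsupp.single_apply, if_pos rfl]
      have h3 : m - Finsupp.single j 1 + Finsupp.single j 1 = m := by
        ext a
        rw [Finsupp.add_apply, Finsupp.tsub_apply]
        simp only [Finsupp.single_apply]
        split_ifs with ha
        · subst ha; omega
        · omega
      rw [h2, h3]
      congr 1
      have hc : ((m j : ℝ) - 1) + 1 = (m j : ℝ) := by ring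
      have : (((m j - 1 : ℕ) : ℝ)) + 1 = (m j : ℝ) := by
        have := Nat.succ_pred_eq_of_pos (Nat.pos_of_ne_zero h)
        push_cast [Nat.cast_pred (Nat.pos_of_ne_zero h)]
        ring
      rw [this]
      have hne : (m j : ℝ) ≠ 0 := Nat.cast_ne_zero.mpr h
      field_simp
  | add p q hp hq =>
    rw [map_add, antid_add, hp, hq]
    unfold subz
    rw [map_add]
    ring

theorem totalDegree_subz_le (j : Fin 2) (p : MvPolynomial (Fin 2) ℝ) :
    (subz j p).totalDegree ≤ p.totalDegree := by
  conv_lhs => rw [p.as_sum]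
  unfold subz
  rw [map_sum]
  apply totalDegree_finsetSum_le
  intro m hm
  show (subz j (monomial m (coeff m p))).totalDegree ≤ _
  rw [subz_monomial]
  split_ifs
  · exact (totalDegree_monomial_le _ _).trans (le_totalDegree hm)
  · simp

theorem totalDegree_pderiv_le (i : Fin 2) (p : MvPolynomial (Fin 2) ℝ) {n : ℕ}
    (h : p.totalDegree ≤ n + 1) : (pderiv i p).totalDegree ≤ n := by
  conv_lhs => rw [p.as_sum]
  rw [map_sum]
  apply totalDegree_finsetSum_le
  intro m hm
  rw [pderiv_monomial]
  rcases eq_or_ne (m i) 0 with hz | hz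
  · rw [hz]
    simp
  · refine (totalDegree_monomial_le _ _).trans ?_
    show ((m - Finsupp.single i 1 : Fin 2 →₀ ℕ).sum fun _ e => e) ≤ n
    have hle := (le_totalDegree hm).trans h
    have hsub : ((m - Finsupp.single i 1 : Fin 2 →₀ ℕ).sum fun _ e => e) + 1
        = (m.sum fun _ e => e) := by
      rw [Finsupp.sum_fintype _ _ (fun _ => rfl), Finsupp.sum_fintype _ _ (fun _ => rfl),
        Fin.sum_univ_two, Fin.sum_univ_two, Finsupp.tsub_apply, Finsupp.tsub_apply]
      have hi : i = 0 ∨ i = 1 := by omega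
      rcases hi with rfl | rfl <;> simp [Finsupp.single_apply] <;> omega
    omega

theorem divLM_apply (v : Fin 2 → MvPolynomial (Fin 2) ℝ) :
    divLM v = pderiv 0 (v 0) + pderiv 1 (v 1) := rfl

theorem vrot_zero (q : MvPolynomial (Fin 2) ℝ) : vrot q 0 = pderiv 1 q := rfl
theorem vrot_one (q : MvPolynomial (Fin 2) ℝ) : vrot q 1 = -pderiv 0 q := rfl

theorem divLM_vrot (q : MvPolynomial (Fin 2) ℝ) : divLM (vrot q) = 0 := by
  rw [divLM_apply, vrot_zero, vrot_one, map_neg, pderiv_comm' 0 1, add_neg_cancel]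

theorem exists_pot (v : Fin 2 → MvPolynomial (Fin 2) ℝ) (hdiv : divLM v = 0) (k : ℕ)
    (hdeg : ∀ i, (v i).totalDegree ≤ k) :
    ∃ q : MvPolynomial (Fin 2) ℝ, q.totalDegree ≤ k + 1 ∧ vrot q = v := by
  set q : MvPolynomial (Fin 2) ℝ := antid 1 (v 0) - antid 0 (subz 1 (v 1)) with hq
  have hd01 : pderiv 0 (v 0) = -pderiv 1 (v 1) := by
    rw [divLM_apply] at hdiv
    linear_combination hdiv
  have h1 : pderiv 1 q = v 0 := by
    rw [hq, map_sub, pderiv_antid_self, pderiv_antid_ne (by decide : (0 : Fin 2) ≠ 1),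
      pderiv_subz, antid_zero, sub_zero]
  have h0 : pderiv 0 q = -(v 1) := by
    rw [hq, map_sub, pderiv_antid_self, pderiv_antid_ne (by decide : (1 : Fin 2) ≠ 0),
      hd01, antid_neg, antid_pderiv]
    ring
  refine ⟨q, ?_, ?_⟩
  · rw [hq]
    refine (totalDegree_sub _ _).trans (max_le ?_ ?_)
    · exact (totalDegree_antid_le _ _).trans (by have := hdeg 0; omega)
    · refine (totalDegree_antid_le _ _).trans ?_
      have := (totalDegree_subz_le 1 (v 1)).trans (hdeg 1)
      omega
  · funext i
    have hi : i = 0 ∨ i = 1 := by omega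
    rcases hi with rfl | rfl
    · rw [vrot_zero, h1]
    · rw [vrot_one, h0, neg_neg]

theorem poly_eq_zero_of_vanish_interior (E : Set (Fin 2 → ℝ)) (hEi : (interior E).Nonempty)
    (p : MvPolynomial (Fin 2) ℝ) (h : ∀ x ∈ interior E, eval x p = 0) : p = 0 := by
  have han : AnalyticOnNhd ℝ (fun x : Fin 2 → ℝ => eval x p) Set.univ :=
    AnalyticOnNhd.eval_continuousLinearMap (ContinuousLinearMap.id ℝ (Fin 2 → ℝ)) p
  obtain ⟨z₀, hz₀⟩ := hEi
  have hev : (fun x : Fin 2 → ℝ => eval x p) =ᶠ[nhds z₀] 0 := by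
    filter_upwards [isOpen_interior.mem_nhds hz₀] with x hx
    exact h x hx
  have := han.eqOn_zero_of_preconnected_of_eventuallyEq_zero isPreconnected_univ
    (Set.mem_univ z₀) hev
  apply MvPolynomial.funext
  intro x
  have hx := this (Set.mem_univ x)
  simpa using hx

theorem vanish_of_integral_sq_zero (E : Set (Fin 2 → ℝ)) (hEm : MeasurableSet E)
    (hEb : Bornology.IsBounded E) (hEi : (interior E).Nonempty)
    (v : Fin 2 → MvPolynomial (Fin 2) ℝ)
    (h : (∫ x in E, ∑ i, eval x (v i) * eval x (v i)) = 0) : v = 0 := by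
  set f : (Fin 2 → ℝ) → ℝ := fun x => ∑ i, eval x (v i) * eval x (v i) with hf
  have hc : Continuous f :=
    continuous_finset_sum _ fun i _ =>
      (MvPolynomial.continuous_eval (v i)).mul (MvPolynomial.continuous_eval (v i))
  have hint : IntegrableOn f E volume :=
    ((hc.continuousOn).integrableOn_compact hEb.isCompact_closure).mono_set subset_closure
  have hnn : ∀ x, 0 ≤ f x := fun x => Finset.sum_nonneg fun i _ => mul_self_nonneg _
  have hae : f =ᵐ[volume.restrict E] 0 := by
    rw [← MeasureTheory.integral_eq_zero_iff_of_nonneg (fun x => hnn x) hint]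
    exact h
  have haei : f =ᵐ[volume.restrict (interior E)] 0 :=
    MeasureTheory.ae_restrict_of_ae_restrict_of_subset interior_subset hae
  -- the open set where f ≠ 0 inside interior E is null hence empty
  have hvanish : ∀ x ∈ interior E, f x = 0 := by
    by_contra hcon
    push_neg at hcon
    obtain ⟨x₀, hx₀, hfx₀⟩ := hcon
    set U : Set (Fin 2 → ℝ) := interior E ∩ {x | f x ≠ 0} with hU
    have hUopen : IsOpen U :=
      isOpen_interior.inter (isOpen_compl_singleton.preimage hc)
    have hUne : U.Nonempty := ⟨x₀, hx₀, hfx₀⟩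
    have hUnull : volume U = 0 := by
      have := MeasureTheory.ae_iff.mp haei
      rw [MeasureTheory.Measure.restrict_apply₀' isOpen_interior.measurableSet.nullMeasurableSet]
        at this
      have heq : {a | ¬ f a = (0 : (Fin 2 → ℝ) → ℝ) a} ∩ interior E = U := by
        ext x; constructor
        · rintro ⟨hx1, hx2⟩; exact ⟨hx2, hx1⟩
        · rintro ⟨hx1, hx2⟩; exact ⟨hx2, hx1⟩
      rwa [heq] at this
    exact absurd hUnull (hUopen.measure_pos volume hUne).ne'
  have hcomp : ∀ i, ∀ x ∈ interior E, eval x (v i) = 0 := by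
    intro i x hx
    have hfx := hvanish x hx
    rw [hf] at hfx
    simp only [Fin.sum_univ_two] at hfx
    have h0 : (0:ℝ) ≤ eval x (v 0) * eval x (v 0) := mul_self_nonneg _
    have h1 : (0:ℝ) ≤ eval x (v 1) * eval x (v 1) := mul_self_nonneg _
    have hi : i = 0 ∨ i = 1 := by omega
    rcases hi with rfl | rfl
    · nlinarith
    · nlinarith
  funext i
  exact poly_eq_zero_of_vanish_interior E hEi (v i) (hcomp i)

theorem ipL_apply (E : Set (Fin 2 → ℝ)) (hEb : Bornology.IsBounded E)
    (g v : Fin 2 → MvPolynomial (Fin 2) ℝ) :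
    ipL E hEb g v = ∫ x in E, ∑ i, eval x (v i) * eval x (g i) := rfl

theorem ipL_symm (E : Set (Fin 2 → ℝ)) (hEb : Bornology.IsBounded E)
    (g v : Fin 2 → MvPolynomial (Fin 2) ℝ) :
    ipL E hEb g v = ipL E hEb v g := by
  rw [ipL_apply, ipL_apply]
  congr 1
  funext x
  exact Finset.sum_congr rfl fun i _ => mul_comm _ _

/-- `vrot` as a linear map. -/
noncomputable def rotL : MvPolynomial (Fin 2) ℝ →ₗ[ℝ] (Fin 2 → MvPolynomial (Fin 2) ℝ) where
  toFun := vrot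
  map_add' p q := by
    funext i
    have hi : i = 0 ∨ i = 1 := by omega
    rcases hi with rfl | rfl
    · simp [vrot_zero, map_add]
    · simp only [vrot_one, Pi.add_apply, map_add, neg_add]
      try abel
  map_smul' c p := by
    funext i
    have hi : i = 0 ∨ i = 1 := by omega
    rcases hi with rfl | rfl <;>
      simp [vrot_zero, vrot_one, _root_.map_smul, Pi.smul_apply]

theorem rotL_apply (p : MvPolynomial (Fin 2) ℝ) : rotL p = vrot p := rfl

theorem mem_Pvec_iff (k : ℕ) (v : Fin 2 → MvPolynomial (Fin 2) ℝ) :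
    v ∈ Pvec k ↔ ∀ i, (v i).totalDegree ≤ k := by
  unfold Pvec
  rw [Submodule.mem_pi]
  constructor
  · intro h i
    exact (mem_restrictTotalDegree _ _ _).mp (h i (Set.mem_univ i))
  · intro h i _
    exact (mem_restrictTotalDegree _ _ _).mpr (h i)

theorem vrot_mem_Pvec {k : ℕ} {p : MvPolynomial (Fin 2) ℝ} (hp : p.totalDegree ≤ k + 1) :
    vrot p ∈ Pvec k := by
  rw [mem_Pvec_iff]
  intro i
  have hi : i = 0 ∨ i = 1 := by omega
  rcases hi with rfl | rfl
  · rw [vrot_zero]; exact totalDegree_pderiv_le _ _ hp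
  · rw [vrot_one, totalDegree_neg]; exact totalDegree_pderiv_le _ _ hp

theorem mem_Rperp_iff (E : Set (Fin 2 → ℝ)) (hEb : Bornology.IsBounded E) (k : ℕ)
    (v : Fin 2 → MvPolynomial (Fin 2) ℝ) :
    v ∈ Rperp E hEb k ↔ v ∈ Pvec k ∧
      ∀ p : MvPolynomial (Fin 2) ℝ, p.totalDegree ≤ k + 1 → ipL E hEb (vrot p) v = 0 := by
  unfold Rperp
  rw [Submodule.mem_inf]
  apply and_congr Iff.rfl
  rw [Submodule.mem_iInf]
  constructor
  · intro h p hp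
    have := h p
    rw [Submodule.mem_iInf] at this
    exact LinearMap.mem_ker.mp (this hp)
  · intro h p
    rw [Submodule.mem_iInf]
    intro hp
    exact LinearMap.mem_ker.mpr (h p hp)

theorem pderiv_eq_zero_of_deg0 (i : Fin 2) (p : MvPolynomial (Fin 2) ℝ)
    (h : p.totalDegree = 0) : pderiv i p = 0 := by
  conv_lhs => rw [p.as_sum]
  rw [map_sum]
  apply Finset.sum_eq_zero
  intro m hm
  rw [pderiv_monomial, (totalDegree_eq_zero_iff _ p).mp h m hm i]
  simp

theorem exists_proj (k : ℕ) (E : Set (Fin 2 → ℝ)) (hEm : MeasurableSet E)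
    (hEb : Bornology.IsBounded E) (hEi : (interior E).Nonempty)
    (w : Fin 2 → MvPolynomial (Fin 2) ℝ) (hw : w ∈ Pvec k) :
    ∃ v ∈ Rperp E hEb k, divLM v = divLM w := by
  classical
  set S := MvPolynomial.restrictTotalDegree (Fin 2) ℝ (k+1) with hS
  set W := LinearMap.range (rotL.comp S.subtype) with hW
  haveI : FiniteDimensional ℝ W := inferInstance
  -- the map sending r ∈ W to the functional u ↦ ⟨u, r⟩ on W
  set T : W →ₗ[ℝ] Module.Dual ℝ W :=
    { toFun := fun r => (ipL E hEb r).comp W.subtype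
      map_add' := fun r r' => by
        ext u
        simp only [LinearMap.comp_apply, LinearMap.add_apply, Submodule.coe_subtype]
        rw [ipL_symm, ipL_symm E hEb (↑r) (↑u), ipL_symm E hEb (↑r') (↑u),
          Submodule.coe_add, map_add]
      map_smul' := fun c r => by
        ext u
        simp only [LinearMap.comp_apply, LinearMap.smul_apply, RingHom.id_apply,
          Submodule.coe_subtype]
        rw [ipL_symm, ipL_symm E hEb (↑r) (↑u), Submodule.coe_smul, _root_.map_smul] } with hT
  have hTinj : Function.Injective T := by
    rw [← LinearMap.ker_eq_bot, Submodule.eq_bot_iff]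
    intro r hr
    rw [LinearMap.mem_ker] at hr
    have h0 : ipL E hEb (↑r) (↑r) = 0 := by
      have := congrArg (fun f => f r) hr
      simpa [hT] using this
    have : (r : Fin 2 → MvPolynomial (Fin 2) ℝ) = 0 :=
      vanish_of_integral_sq_zero E hEm hEb hEi _ (by rw [← ipL_apply E hEb r r]; exact h0)
    exact Subtype.ext this
  have hTsurj : Function.Surjective T :=
    (LinearMap.injective_iff_surjective_of_finrank_eq_finrank
      (Subspace.dual_finrank_eq).symm).mp hTinj
  obtain ⟨r, hr⟩ := hTsurj ((ipL E hEb w).comp W.subtype)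
  refine ⟨w - ↑r, ?_, ?_⟩
  · obtain ⟨s, hs⟩ := r.2
    rw [mem_Rperp_iff]
    constructor
    · apply Submodule.sub_mem _ hw
      rw [← hs, LinearMap.comp_apply, rotL_apply]
      exact vrot_mem_Pvec ((mem_restrictTotalDegree _ _ _).mp s.2)
    · intro p hp
      have hpW : vrot p ∈ W := by
        rw [hW]
        exact ⟨⟨p, (mem_restrictTotalDegree _ _ _).mpr hp⟩, rfl⟩
      have hℓ := congrArg (fun f => f ⟨vrot p, hpW⟩) hr
      simp only [hT, LinearMap.coe_mk, AddHom.coe_mk, LinearMap.comp_apply,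
        Submodule.coe_subtype] at hℓ
      rw [map_sub]
      rw [ipL_symm E hEb (vrot p) w, ipL_symm E hEb (vrot p) (↑r)]
      rw [ipL_symm E hEb w (vrot p), ipL_symm E hEb (↑r) (vrot p)] at hℓ
      rw [ipL_symm E hEb (vrot p) w, ipL_symm E hEb (vrot p) (↑r)] at hℓ
      linarith [hℓ]
  · obtain ⟨s, hs⟩ := r.2
    rw [map_sub, ← hs, LinearMap.comp_apply, rotL_apply, divLM_vrot, sub_zero]

end Aux

/-- For a bounded polygon `E` (with nonempty interior), the divergence restricted to the
`L²(E)`-orthogonal complement `R_k^⊥` of `R_k = rot(P_{k+1})` in `(P_k)²` is a linear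
isomorphism onto `P_{k-1}`. -/
theorem div_iso_on_Rperp (k : ℕ) (E : Set (Fin 2 → ℝ)) (hEm : MeasurableSet E)
    (hEb : Bornology.IsBounded E) (hEi : (interior E).Nonempty) :
    (∀ v ∈ Rperp E hEb k, ∀ w ∈ Rperp E hEb k, divLM v = divLM w → v = w) ∧
    (∀ v ∈ Rperp E hEb k, degLE ((k : ℤ) - 1) (divLM v)) ∧
    (∀ q : MvPolynomial (Fin 2) ℝ, degLE ((k : ℤ) - 1) q →
      ∃ v ∈ Rperp E hEb k, divLM v = q) := by
  refine ⟨?_, ?_, ?_⟩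
  · -- injectivity
    intro v hv w hw hd
    set u := v - w with hu
    have huR : u ∈ Rperp E hEb k := Submodule.sub_mem _ hv hw
    have hud : divLM u = 0 := by rw [hu, map_sub, hd, sub_self]
    rw [Aux.mem_Rperp_iff] at huR
    obtain ⟨huP, horth⟩ := huR
    rw [Aux.mem_Pvec_iff] at huP
    obtain ⟨q, hq1, hq2⟩ := Aux.exists_pot u hud k huP
    have h0 : ipL E hEb (vrot q) u = 0 := horth q hq1
    rw [hq2] at h0
    have hz : u = 0 := Aux.vanish_of_integral_sq_zero E hEm hEb hEi u
      (by rw [← Aux.ipL_apply E hEb u u]; exact h0)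
    rw [hu] at hz
    exact sub_eq_zero.mp hz
  · -- degree bound
    intro v hv
    rw [Aux.mem_Rperp_iff] at hv
    have hP := (Aux.mem_Pvec_iff _ _).mp hv.1
    unfold degLE
    rcases Nat.eq_zero_or_pos k with rfl | hk
    · rw [if_neg (by norm_num)]
      rw [Aux.divLM_apply, Aux.pderiv_eq_zero_of_deg0 _ _ (Nat.le_zero.mp (hP 0)),
        Aux.pderiv_eq_zero_of_deg0 _ _ (Nat.le_zero.mp (hP 1)), add_zero]
    · rw [if_pos (by omega)]
      have ht : ((k : ℤ) - 1).toNat = k - 1 := by omega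
      rw [ht, Aux.divLM_apply]
      refine (totalDegree_add _ _).trans (max_le ?_ ?_)
      · exact Aux.totalDegree_pderiv_le _ _ (by have := hP 0; omega)
      · exact Aux.totalDegree_pderiv_le _ _ (by have := hP 1; omega)
  · -- surjectivity
    intro q hq
    set w : Fin 2 → MvPolynomial (Fin 2) ℝ := ![Aux.antid 0 q, 0] with hw
    have hw0 : w 0 = Aux.antid 0 q := rfl
    have hw1 : w 1 = 0 := rfl
    have hwP : w ∈ Pvec k := by
      rw [Aux.mem_Pvec_iff]
      intro i
      have hi : i = 0 ∨ i = 1 := by omega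
      rcases hi with rfl | rfl
      · rw [hw0]
        unfold degLE at hq
        rcases Nat.eq_zero_or_pos k with rfl | hk
        · rw [if_neg (by norm_num)] at hq
          rw [hq, Aux.antid_zero]
          simp
        · rw [if_pos (by omega)] at hq
          have := Aux.totalDegree_antid_le 0 q
          have ht : ((k : ℤ) - 1).toNat = k - 1 := by omega
          rw [ht] at hq
          omega
      · rw [hw1]
        simp
    obtain ⟨v, hvR, hvd⟩ := Aux.exists_proj k E hEm hEb hEi w hwP
    refine ⟨v, hvR, ?_⟩
    rw [hvd, Aux.divLM_apply, hw0, hw1, Aux.pderiv_antid_self, map_zero, add_zero]
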